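/- In a connected finite simple graph, any two longest paths share at least one common vertex. -/

import Mathlib

open SimpleGraph

private lemma isPath_append_aux {V : Type} {G : SimpleGraph V} {u v w : V}
    {p : G.Walk u v} {q : G.Walk v w} (hp : p.IsPath) (hq : q.IsPath)
    (h : ∀ z, z ∈ p.support → z ∈ q.support → z = v) : (p.append q).IsPath := by
  rw [SimpleGraph.Walk.isPath_def, SimpleGraph.Walk.support_append, List.nodup_append]
  have hq' := hq.support_nodup
  rw [q.support_eq_cons, List.nodup_cons] at hq'
  refine ⟨hp.support_nodup, hq'.2, ?_⟩
  intro z hz z' hz' hzz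
  rw [← hzz] at hz'
  have : z = v := h z hz (by rw [q.support_eq_cons]; exact List.mem_cons_of_mem _ hz')
  subst this
  exact hq'.1 hz'

/-- take the first vertex of a walk in a set `Q`. -/
private lemma first_in_set {V : Type} {G : SimpleGraph V} (Q : Set V) :
    ∀ {a b : V} (w : G.Walk a b), a ∉ Q → b ∈ Q →
    ∃ (y : V) (t : G.Walk a y), y ∈ Q ∧ (∀ z ∈ t.support, z ∈ Q → z = y) ∧
      t.support ⊆ w.support := by
  intro a b w
  induction w with
  | nil => intro ha hb; exact absurd hb ha
  | cons h w ih =>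
    intro ha hb
    rename_i a a' b
    by_cases ha' : a' ∈ Q
    · refine ⟨a', Walk.cons h Walk.nil, ha', ?_, ?_⟩
      · intro z hz hzQ
        simp only [Walk.support_cons, Walk.support_nil, List.mem_cons, List.mem_singleton] at hz
        rcases hz with rfl | hz
        · exact absurd hzQ ha
        · simpa using hz
      · intro z hz
        simp only [Walk.support_cons, Walk.support_nil, List.mem_cons] at hz ⊢
        rcases hz with rfl | hz
        · left; rfl
        · right; simp only [List.mem_singleton, List.not_mem_nil, or_false] at hz
          exact hz ▸ w.start_mem_support
    · obtain ⟨y, t, hy, ht, hsub⟩ := ih ha' hb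
      refine ⟨y, Walk.cons h t, hy, ?_, ?_⟩
      · intro z hz hzQ
        rw [Walk.support_cons, List.mem_cons] at hz
        rcases hz with rfl | hz
        · exact absurd hzQ ha
        · exact ht z hz hzQ
      · intro z hz
        rw [Walk.support_cons, List.mem_cons] at hz ⊢
        rcases hz with rfl | hz
        · left; rfl
        · right; exact hsub hz

/-- half of a path ending at x -/
private lemma half_path {V : Type} [DecidableEq V] {G : SimpleGraph V} {u v x : V}
    (p : G.Walk u v) (hp : p.IsPath) (hx : x ∈ p.support) :
    ∃ (a : V) (w : G.Walk a x), w.IsPath ∧ (∀ z ∈ w.support, z ∈ p.support) ∧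
      p.length ≤ 2 * w.length := by
  have hspec := p.take_spec hx
  have hlen : (p.takeUntil x hx).length + (p.dropUntil x hx).length = p.length := by
    have := congrArg Walk.length hspec
    rwa [Walk.length_append] at this
  by_cases hc : (p.dropUntil x hx).length ≤ (p.takeUntil x hx).length
  · refine ⟨u, p.takeUntil x hx, hp.takeUntil hx, ?_, by omega⟩
    intro z hz; exact p.support_takeUntil_subset hx hz
  · refine ⟨v, (p.dropUntil x hx).reverse, (hp.dropUntil hx).reverse, ?_, ?_⟩
    · intro z hz
      rw [Walk.support_reverse, List.mem_reverse] at hz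
      exact p.support_dropUntil_subset hx hz
    · rw [Walk.length_reverse]; omega


/-- `p` is a longest path in `G`: it is a path and no path in `G` is longer. -/
def IsLongestPath {V : Type} (G : SimpleGraph V) {u v : V} (p : G.Walk u v) : Prop :=
  p.IsPath ∧ ∀ ⦃a b : V⦄ (q : G.Walk a b), q.IsPath → q.length ≤ p.length

/-- In a connected finite simple graph, any two longest paths share at least one
common vertex. -/
theorem two_longest_paths_intersect {V : Type} [Fintype V] (G : SimpleGraph V)
    (hG : G.Connected) {u v c d : V} (p : G.Walk u v) (q : G.Walk c d)
    (hp : IsLongestPath G p) (hq : IsLongestPath G q) :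
    ∃ x, x ∈ p.support ∧ x ∈ q.support := by

  classical
  by_contra hcon
  push_neg at hcon
  -- disjoint supports
  have hdisj : ∀ z, z ∈ p.support → z ∉ q.support := hcon
  -- a walk from u to c
  obtain ⟨w⟩ := hG.preconnected u c
  -- first vertex of w in q.support
  obtain ⟨y, t, hyQ, htQ, htsub⟩ := first_in_set (Q := {z | z ∈ q.support}) w
    (hdisj u p.start_mem_support) q.start_mem_support
  -- from t.reverse (y → u), first vertex in p.support
  obtain ⟨x, t2, hxP, ht2P, ht2sub⟩ := first_in_set (Q := {z | z ∈ p.support}) t.reverse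
    (fun h => hdisj y h hyQ) p.start_mem_support
  -- r : x → y path
  set r0 := t2.reverse with hr0
  have hr0Q : ∀ z ∈ r0.support, z ∈ q.support → z = y := by
    intro z hz hzq
    rw [hr0, Walk.support_reverse, List.mem_reverse] at hz
    have : z ∈ t.support := by
      have := ht2sub hz; rwa [Walk.support_reverse, List.mem_reverse] at this
    exact htQ z this hzq
  have hr0P : ∀ z ∈ r0.support, z ∈ p.support → z = x := by
    intro z hz hzp
    rw [hr0, Walk.support_reverse, List.mem_reverse] at hz
    exact ht2P z hz hzp
  set r := r0.toPath.1 with hrdef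
  have hrpath : r.IsPath := r0.toPath.2
  have hrsub : ∀ z ∈ r.support, z ∈ r0.support := fun z hz => r0.support_toPath_subset hz
  have hrQ : ∀ z ∈ r.support, z ∈ q.support → z = y := fun z hz => hr0Q z (hrsub z hz)
  have hrP : ∀ z ∈ r.support, z ∈ p.support → z = x := fun z hz => hr0P z (hrsub z hz)
  have hxy : x ≠ y := fun h => hdisj x hxP (h ▸ hyQ)
  have hrlen : 1 ≤ r.length := by
    rcases Nat.eq_zero_or_pos r.length with h0 | h1
    · exact absurd (Walk.eq_of_length_eq_zero h0) hxy
    · exact h1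
  -- halves
  obtain ⟨a, pb, hpbP, hpbsub, hpblen⟩ := half_path p hp.1 hxP
  obtain ⟨b, qb0, hqbP0, hqbsub0, hqblen0⟩ := half_path q hq.1 hyQ
  set qb := qb0.reverse with hqbdef
  have hqbP : qb.IsPath := hqbP0.reverse
  have hqbsub : ∀ z ∈ qb.support, z ∈ q.support := by
    intro z hz; rw [hqbdef, Walk.support_reverse, List.mem_reverse] at hz
    exact hqbsub0 z hz
  have hqblen : q.length ≤ 2 * qb.length := by rw [hqbdef, Walk.length_reverse]; exact hqblen0
  -- combined walk
  have hrq : (r.append qb).IsPath := by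
    apply isPath_append_aux hrpath hqbP
    intro z hz hz'
    exact hrQ z hz (hqbsub z hz')
  have hs : (pb.append (r.append qb)).IsPath := by
    apply isPath_append_aux hpbP hrq
    intro z hz hz'
    rw [Walk.mem_support_append_iff] at hz'
    rcases hz' with hz' | hz'
    · exact hrP z hz' (hpbsub z hz)
    · exact absurd (hqbsub z hz') (hdisj z (hpbsub z hz))
  have hslen := hp.2 _ hs
  rw [Walk.length_append, Walk.length_append] at hslen
  have hqle : q.length ≤ p.length := hq.2 q hq.1 |>.trans_eq rfl |> fun _ => hp.2 q hq.1
  have hple : p.length ≤ q.length := hq.2 p hp.1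
  omega
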